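/- For all j ≥ 1 and m ≥ 1, the number of 312-avoiding permutations of {1,…,(j+1)m} whose up/down pattern is D^j U D^j U ⋯ U D^j (m blocks of j consecutive D's separated by single U's) equals the Fuss–Catalan number (1/(jm+1))·binom((j+1)m, m), which is the number of dissections of a convex (jm+2)-gon into m pieces each of which is a (j+2)-gon. -/

import Mathlib

/-- A permutation of `{1,…,N}` (as `Equiv.Perm (Fin N)`) is 312-avoiding if there are
no positions `i < j < k` with `π(j) < π(k) < π(i)`. -/
def Avoids312 {N : ℕ} (π : Equiv.Perm (Fin N)) : Prop :=
  ¬ ∃ i j k : Fin N, i < j ∧ j < k ∧ π j < π k ∧ π k < π i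

/-- The up/down pattern of `π` is `(D^j U)^{m-1} D^j`: in 1-indexed terms, position `p`
of the pattern is `U` exactly when `(j+1) ∣ p`; in the 0-indexed formulation, the step
from position `i` to `i+1` is an ascent exactly when `(j+1) ∣ (i+1)`. -/
def PatternDjU (j : ℕ) {N : ℕ} (π : Equiv.Perm (Fin N)) : Prop :=
  ∀ i k : Fin N, (k : ℕ) = (i : ℕ) + 1 → (π i < π k ↔ (j + 1) ∣ ((i : ℕ) + 1))


namespace P312

/-! ### Generic `k`-th largest element machinery for finite sets of naturals -/

/-- number of elements of `S` strictly above `x`. -/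
def cardAbove (S : Finset ℕ) (x : ℕ) : ℕ := (S.filter (fun y => x < y)).card

/-- the `k` largest elements of `S`. -/
def top (k : ℕ) (S : Finset ℕ) : Finset ℕ := S.filter (fun x => cardAbove S x < k)

lemma top_subset (k : ℕ) (S : Finset ℕ) : top k S ⊆ S := Finset.filter_subset _ _

lemma cardAbove_strict_anti {S : Finset ℕ} {x y : ℕ} (hy : y ∈ S) (hxy : x < y) :
    cardAbove S y < cardAbove S x := by
  apply Finset.card_lt_card
  constructor
  · intro z hz
    simp only [Finset.mem_filter] at hz ⊢
    exact ⟨hz.1, lt_trans hxy hz.2⟩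
  · intro hsub
    have : y ∈ S.filter (fun z => y < z) := hsub (by simp [hy, hxy])
    simp at this

lemma cardAbove_injOn {S : Finset ℕ} {x y : ℕ} (hx : x ∈ S) (hy : y ∈ S)
    (h : cardAbove S x = cardAbove S y) : x = y := by
  rcases lt_trichotomy x y with h' | h' | h'
  · exact absurd h (Nat.ne_of_gt (cardAbove_strict_anti hy h'))
  · exact h'
  · exact absurd h (Nat.ne_of_lt (cardAbove_strict_anti hx h'))

lemma cardAbove_lt_card {S : Finset ℕ} {x : ℕ} (hx : x ∈ S) : cardAbove S x < S.card := by
  have h1 : S.filter (fun y => x < y) ⊆ S.erase x := by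
    intro z hz
    simp only [Finset.mem_filter] at hz
    exact Finset.mem_erase.2 ⟨Nat.ne_of_gt hz.2, hz.1⟩
  calc cardAbove S x ≤ (S.erase x).card := Finset.card_le_card h1
    _ < S.card := Finset.card_erase_lt_of_mem hx

lemma image_cardAbove (S : Finset ℕ) :
    S.image (cardAbove S) = Finset.range S.card := by
  apply Finset.eq_of_subset_of_card_le
  · intro r hr
    simp only [Finset.mem_image] at hr
    obtain ⟨x, hx, rfl⟩ := hr
    exact Finset.mem_range.2 (cardAbove_lt_card hx)
  · rw [Finset.card_range, Finset.card_image_of_injOn]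
    intro x hx y hy h
    exact cardAbove_injOn hx hy h

lemma exists_cardAbove_eq {S : Finset ℕ} {r : ℕ} (hr : r < S.card) :
    ∃ x ∈ S, cardAbove S x = r := by
  have : r ∈ S.image (cardAbove S) := by
    rw [image_cardAbove]; exact Finset.mem_range.2 hr
  simpa using this

/-- the element of `S` with exactly `r` elements above it (the `(r+1)`-th largest). -/
def kth (S : Finset ℕ) (r : ℕ) : ℕ := (S.filter (fun x => cardAbove S x = r)).sup id

lemma filter_cardAbove_eq {S : Finset ℕ} {r : ℕ} (hr : r < S.card) :
    ∃ x, x ∈ S ∧ cardAbove S x = r ∧ S.filter (fun x => cardAbove S x = r) = {x} := by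
  obtain ⟨x, hx, hcx⟩ := exists_cardAbove_eq hr
  refine ⟨x, hx, hcx, ?_⟩
  apply Finset.eq_singleton_iff_unique_mem.2
  refine ⟨by simp [hx, hcx], ?_⟩
  intro y hy
  simp only [Finset.mem_filter] at hy
  exact cardAbove_injOn hy.1 hx (hy.2.trans hcx.symm)

lemma kth_mem {S : Finset ℕ} {r : ℕ} (hr : r < S.card) :
    kth S r ∈ S ∧ cardAbove S (kth S r) = r := by
  obtain ⟨x, hx, hcx, hfil⟩ := filter_cardAbove_eq hr
  have : kth S r = x := by rw [kth, hfil, Finset.sup_singleton, id]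
  rw [this]; exact ⟨hx, hcx⟩

lemma kth_eq_of {S : Finset ℕ} {r : ℕ} {x : ℕ} (hr : r < S.card)
    (hx : x ∈ S) (hcx : cardAbove S x = r) : kth S r = x := by
  obtain ⟨hmem, hc⟩ := kth_mem hr
  exact cardAbove_injOn hmem hx (hc.trans hcx.symm)

lemma le_kth_zero {S : Finset ℕ} (hS : 0 < S.card) {y : ℕ} (hy : y ∈ S) : y ≤ kth S 0 := by
  obtain ⟨hmem, hc⟩ := kth_mem hS
  by_contra h
  have := cardAbove_strict_anti hy (Nat.lt_of_not_le h)
  omega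

lemma kth_strict_anti {S : Finset ℕ} {r r' : ℕ} (h : r < r') (hr' : r' < S.card) :
    kth S r' < kth S r := by
  have h1 := kth_mem (lt_trans h hr')
  have h2 := kth_mem hr'
  rcases lt_trichotomy (kth S r') (kth S r) with h' | h' | h'
  · exact h'
  · exfalso; rw [← h'] at h1; omega
  · have := cardAbove_strict_anti h2.1 h'; omega

lemma mem_top_iff {S : Finset ℕ} {k x : ℕ} :
    x ∈ top k S ↔ x ∈ S ∧ cardAbove S x < k := Finset.mem_filter

lemma lt_of_not_top {S : Finset ℕ} {k x y : ℕ} (hx : x ∈ S) (hxt : x ∉ top k S)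
    (hy : y ∈ top k S) : x < y := by
  rw [mem_top_iff] at hxt hy
  have hax : k ≤ cardAbove S x := by
    by_contra h; exact hxt ⟨hx, Nat.lt_of_not_le h⟩
  rcases lt_trichotomy x y with h' | h' | h'
  · exact h'
  · subst h'; omega
  · have := cardAbove_strict_anti hx h'; omega

lemma card_top {S : Finset ℕ} {k : ℕ} (hk : k ≤ S.card) : (top k S).card = k := by
  have : (top k S).card = (Finset.range k).card := by
    apply Finset.card_bij (fun x _ => cardAbove S x)
    · intro a ha
      rw [mem_top_iff] at ha
      exact Finset.mem_range.2 ha.2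
    · intro a ha b hb h
      rw [mem_top_iff] at ha hb
      exact cardAbove_injOn ha.1 hb.1 h
    · intro r hr
      rw [Finset.mem_range] at hr
      obtain ⟨x, hx, hcx⟩ := exists_cardAbove_eq (lt_of_lt_of_le hr hk)
      exact ⟨x, mem_top_iff.2 ⟨hx, by omega⟩, hcx⟩
  rw [this, Finset.card_range]

lemma kth_mem_top {S : Finset ℕ} {r k : ℕ} (hr : r < k) (hk : k ≤ S.card) :
    kth S r ∈ top k S := by
  obtain ⟨hmem, hc⟩ := kth_mem (lt_of_lt_of_le hr hk)
  exact mem_top_iff.2 ⟨hmem, by omega⟩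

end P312

namespace P312

/-! ### Construction of the permutation from a sequence `d` -/

section Construction

variable (j m : ℕ) (d : ℕ → ℕ)

/-- partial sums -/
def S (d : ℕ → ℕ) (t : ℕ) : ℕ := ∑ i ∈ Finset.range t, d i

/-- running block maxima (+1) -/
def c (t : ℕ) : ℕ := S d (t + 1) + (t + 1)

/-- the set of values used by the first `t` blocks -/
def U : ℕ → Finset ℕ
  | 0 => ∅
  | t + 1 => U t ∪ top (j + 1) (Finset.range (c d t) \ U t)

/-- available values at stage `t` -/
def T (t : ℕ) : Finset ℕ := Finset.range (c d t) \ U j d t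

/-- values of block `t` -/
def V (t : ℕ) : Finset ℕ := top (j + 1) (T j d t)

lemma U_succ (t : ℕ) : U j d (t + 1) = U j d t ∪ V j d t := rfl

lemma S_succ (t : ℕ) : S d (t + 1) = S d t + d t := Finset.sum_range_succ d t

lemma c_lt_c {t t' : ℕ} (h : t < t') : c d t < c d t' := by
  have key : ∀ k, c d t < c d (t + 1 + k) := by
    intro k
    induction k with
    | zero => simp only [Nat.add_zero, c, S_succ]; omega
    | succ k ih =>
        have : c d (t + 1 + k) < c d (t + 1 + k + 1) := by
          simp only [c, S_succ]; omega
        have h2 : t + 1 + (k + 1) = t + 1 + k + 1 := by omega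
        rw [h2]; omega
  have := key (t' - t - 1)
  have ht' : t + 1 + (t' - t - 1) = t' := by omega
  rwa [ht'] at this

lemma c_mono {t t' : ℕ} (h : t ≤ t') : c d t ≤ c d t' := by
  rcases Nat.eq_or_lt_of_le h with rfl | h
  · exact le_refl _
  · exact le_of_lt (c_lt_c d h)

lemma U_mono {t t' : ℕ} (h : t ≤ t') : U j d t ⊆ U j d t' := by
  induction t' with
  | zero =>
      have : t = 0 := by omega
      subst this; exact fun x hx => hx
  | succ t' ih =>
      rcases Nat.eq_or_lt_of_le h with rfl | h
      · exact fun x hx => hx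
      · exact (ih (by omega)).trans (by rw [U_succ]; exact Finset.subset_union_left)

lemma V_subset_T (t : ℕ) : V j d t ⊆ T j d t := top_subset _ _

lemma V_subset_U (t : ℕ) {t' : ℕ} (h : t < t') : V j d t ⊆ U j d t' := by
  refine Finset.Subset.trans ?_ (U_mono j d h)
  rw [U_succ]; exact Finset.subset_union_right

lemma U_subset_range : ∀ t, U j d t ⊆ Finset.range (c d t) := by
  intro t
  induction t with
  | zero => simp [U]
  | succ t ih =>
      rw [U_succ]
      apply Finset.union_subset
      · exact ih.trans (Finset.range_subset_range.2 (c_mono d (by omega)))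
      · exact ((V_subset_T j d t).trans Finset.sdiff_subset).trans
          (Finset.range_subset_range.2 (c_mono d (by omega)))

lemma U_succ_subset_range (t : ℕ) : U j d (t + 1) ⊆ Finset.range (c d t) := by
  rw [U_succ]
  apply Finset.union_subset
  · exact (U_subset_range j d t).trans (Finset.range_subset_range.2 (c_mono d (by omega)))
  · exact (V_subset_T j d t).trans Finset.sdiff_subset

variable {j m d}

/-- Hypotheses from membership in `D`. -/
structure DH (j m : ℕ) (d : ℕ → ℕ) : Prop where
  sum_eq : S d m = j * m
  partial_ge : ∀ t < m, j * (t + 1) ≤ S d (t + 1)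

lemma DH.c_ge (hd : DH j m d) {t : ℕ} (ht : t < m) : (j + 1) * (t + 1) ≤ c d t := by
  have := hd.partial_ge t ht
  simp only [c]; nlinarith

lemma DH.c_last (hd : DH j m d) (hm : 1 ≤ m) : c d (m - 1) = (j + 1) * m := by
  have h1 : m - 1 + 1 = m := by omega
  simp only [c, h1, hd.sum_eq]; ring

lemma U_card (hd : DH j m d) : ∀ t, t ≤ m → (U j d t).card = (j + 1) * t := by
  intro t
  induction t with
  | zero => intro _; simp [U]
  | succ t ih =>
      intro ht
      have hUsub : U j d t ⊆ Finset.range (c d t) := U_subset_range j d t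
      have hTcard : (T j d t).card = c d t - (j + 1) * t := by
        rw [T, Finset.card_sdiff_of_subset hUsub, Finset.card_range, ih (by omega)]
      have hge : (j + 1) * (t + 1) ≤ c d t := hd.c_ge (by omega)
      have hVcard : (V j d t).card = j + 1 := by
        rw [V]
        refine card_top ?_
        rw [hTcard]
        have hexp : (j + 1) * (t + 1) = (j + 1) * t + (j + 1) := by ring
        omega
      rw [U_succ, Finset.card_union_of_disjoint, ih (by omega), hVcard]
      · ring
      · apply Finset.disjoint_left.2
        intro x hx hxV
        have := (V_subset_T j d t) hxV
        rw [T, Finset.mem_sdiff] at this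
        exact this.2 hx

lemma T_card (hd : DH j m d) {t : ℕ} (ht : t < m) :
    (T j d t).card = c d t - (j + 1) * t ∧ j + 1 ≤ (T j d t).card := by
  have h1 : (T j d t).card = c d t - (j + 1) * t := by
    rw [T, Finset.card_sdiff_of_subset (U_subset_range j d t), Finset.card_range,
      U_card hd t (by omega)]
  have hge : (j + 1) * (t + 1) ≤ c d t := hd.c_ge ht
  refine ⟨h1, ?_⟩
  rw [h1]
  have hexp : (j + 1) * (t + 1) = (j + 1) * t + (j + 1) := by ring
  omega

/-- the "stack discipline" lemma -/
lemma stack_lemma (hd : DH j m d) {t t' x v : ℕ} (htt' : t < t')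
    (hx : x ∈ V j d t) (hv : v ∈ T j d t') (hvc : v < c d t) : v < x := by
  have hvU : v ∉ U j d t' := by
    rw [T, Finset.mem_sdiff] at hv; exact hv.2
  have hvUt : v ∉ U j d t := fun h => hvU (U_mono j d (le_of_lt htt') h)
  have hvT : v ∈ T j d t := by
    rw [T, Finset.mem_sdiff, Finset.mem_range]; exact ⟨hvc, hvUt⟩
  have hvV : v ∉ V j d t := fun h => hvU (V_subset_U j d t htt' h)
  exact lt_of_not_top hvT hvV hx

/-- top element of each stage -/
lemma kth_T_zero (hd : DH j m d) {t : ℕ} (ht : t < m) :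
    kth (T j d t) 0 = c d t - 1 := by
  have hc1 : 1 ≤ c d t := by
    have := hd.c_ge ht
    have hexp : (j + 1) * (t + 1) = (j + 1) * t + j + 1 := by ring
    omega
  have hmem : c d t - 1 ∈ T j d t := by
    rw [T, Finset.mem_sdiff, Finset.mem_range]
    refine ⟨by omega, ?_⟩
    intro hmem
    rcases Nat.eq_zero_or_pos t with rfl | htpos
    · simp [U] at hmem
    · have ht1 : t - 1 + 1 = t := by omega
      have hsub : U j d t ⊆ Finset.range (c d (t - 1)) := by
        rw [← ht1]; exact U_succ_subset_range j d (t - 1)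
      have := hsub hmem
      rw [Finset.mem_range] at this
      have hlt : c d (t - 1) < c d t := c_lt_c d (by omega)
      omega
  have hcard : 0 < (T j d t).card := by have := (T_card hd ht).2; omega
  have h1 := le_kth_zero hcard hmem
  have h2 : kth (T j d t) 0 < c d t := by
    have := (kth_mem hcard).1
    rw [T, Finset.mem_sdiff, Finset.mem_range] at this
    exact this.1
  omega

end Construction
end P312

namespace P312

section Perm

variable {j m : ℕ} {d : ℕ → ℕ}

/-- value of the constructed permutation at position `i` -/
def fval (j : ℕ) (d : ℕ → ℕ) (i : ℕ) : ℕ := kth (T j d (i / (j + 1))) (i % (j + 1))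

lemma blk_lt {i : ℕ} (hi : i < (j + 1) * m) : i / (j + 1) < m :=
  Nat.div_lt_of_lt_mul (by omega)

lemma res_lt_card (hd : DH j m d) {i : ℕ} (hi : i < (j + 1) * m) :
    i % (j + 1) < (T j d (i / (j + 1))).card := by
  have h1 : i % (j + 1) < j + 1 := Nat.mod_lt _ (by omega)
  have h2 := (T_card hd (blk_lt hi)).2
  omega

lemma fval_mem_T (hd : DH j m d) {i : ℕ} (hi : i < (j + 1) * m) :
    fval j d i ∈ T j d (i / (j + 1)) := (kth_mem (res_lt_card hd hi)).1

lemma fval_mem_V (hd : DH j m d) {i : ℕ} (hi : i < (j + 1) * m) :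
    fval j d i ∈ V j d (i / (j + 1)) := by
  apply kth_mem_top (Nat.mod_lt _ (by omega))
  have := (T_card hd (blk_lt hi)).2; omega

lemma fval_cardAbove (hd : DH j m d) {i : ℕ} (hi : i < (j + 1) * m) :
    cardAbove (T j d (i / (j + 1))) (fval j d i) = i % (j + 1) :=
  (kth_mem (res_lt_card hd hi)).2

lemma fval_lt_c (hd : DH j m d) {i : ℕ} (hi : i < (j + 1) * m) :
    fval j d i < c d (i / (j + 1)) := by
  have := fval_mem_T hd hi
  rw [T, Finset.mem_sdiff, Finset.mem_range] at this
  exact this.1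

lemma fval_lt (hd : DH j m d) (hm : 1 ≤ m) {i : ℕ} (hi : i < (j + 1) * m) :
    fval j d i < (j + 1) * m := by
  have h1 := fval_lt_c hd hi
  have h2 : c d (i / (j + 1)) ≤ c d (m - 1) := c_mono d (by have := blk_lt hi; omega)
  rw [hd.c_last hm] at h2
  omega

lemma fval_inj (hd : DH j m d) {i i' : ℕ} (hi : i < (j + 1) * m) (hi' : i' < (j + 1) * m)
    (h : fval j d i = fval j d i') : i = i' := by
  have hsame : ∀ a b : ℕ, a < (j + 1) * m → b < (j + 1) * m →
      a / (j + 1) < b / (j + 1) → fval j d a ≠ fval j d b := by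
    intro a b ha hb hab heq
    have h1 : fval j d a ∈ U j d (b / (j + 1)) := V_subset_U j d _ hab (fval_mem_V hd ha)
    have h2 := fval_mem_T hd hb
    rw [T, Finset.mem_sdiff] at h2
    rw [heq] at h1
    exact h2.2 h1
  rcases lt_trichotomy (i / (j + 1)) (i' / (j + 1)) with hlt | heq | hgt
  · exact absurd h (hsame i i' hi hi' hlt)
  · have c1 := fval_cardAbove hd hi
    have c2 := fval_cardAbove hd hi'
    rw [heq] at c1
    rw [h] at c1
    have hmod : i % (j + 1) = i' % (j + 1) := by rw [← c1, ← c2]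
    have e1 : (j + 1) * (i / (j + 1)) + i % (j + 1) = i := Nat.div_add_mod i (j + 1)
    have e2 : (j + 1) * (i' / (j + 1)) + i' % (j + 1) = i' := Nat.div_add_mod i' (j + 1)
    have e3 : (j + 1) * (i / (j + 1)) = (j + 1) * (i' / (j + 1)) := by rw [heq]
    omega
  · exact absurd h.symm (hsame i' i hi' hi hgt)

/-- The constructed permutation. -/
noncomputable def perm (j m : ℕ) (d : ℕ → ℕ) (hd : DH j m d) (hm : 1 ≤ m) :
    Equiv.Perm (Fin ((j + 1) * m)) :=
  Equiv.ofBijective (fun i => ⟨fval j d i.val, fval_lt hd hm i.isLt⟩)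
    (Finite.injective_iff_bijective.1 (by
      intro a b hab
      apply Fin.ext
      exact fval_inj hd a.isLt b.isLt (by simpa using congrArg Fin.val hab)))

lemma perm_apply (hd : DH j m d) (hm : 1 ≤ m) (i : Fin ((j + 1) * m)) :
    (perm j m d hd hm i : ℕ) = fval j d i.val := rfl

/- division helpers -/
lemma div_mod_succ_of_not_dvd {i : ℕ} (h : ¬ (j + 1) ∣ (i + 1)) :
    (i + 1) / (j + 1) = i / (j + 1) ∧ (i + 1) % (j + 1) = i % (j + 1) + 1 := by
  have hr : i % (j + 1) < j + 1 := Nat.mod_lt _ (by omega)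
  have hi : (j + 1) * (i / (j + 1)) + i % (j + 1) = i := Nat.div_add_mod i (j + 1)
  have hrj : i % (j + 1) ≠ j := by
    intro hrj
    exact h ⟨i / (j + 1) + 1, by rw [Nat.mul_add, Nat.mul_one]; omega⟩
  have heq : i + 1 = (j + 1) * (i / (j + 1)) + (i % (j + 1) + 1) := by omega
  constructor
  · rw [heq, Nat.mul_add_div (show 0 < j + 1 by omega),
      Nat.div_eq_of_lt (show i % (j + 1) + 1 < j + 1 by omega), Nat.add_zero]
  · rw [heq, Nat.mul_add_mod, Nat.mod_eq_of_lt (show i % (j + 1) + 1 < j + 1 by omega)]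

lemma div_mod_succ_of_dvd {i : ℕ} (h : (j + 1) ∣ (i + 1)) :
    (i + 1) / (j + 1) = i / (j + 1) + 1 ∧ (i + 1) % (j + 1) = 0 ∧ i % (j + 1) = j := by
  have hr : i % (j + 1) < j + 1 := Nat.mod_lt _ (by omega)
  have hi : (j + 1) * (i / (j + 1)) + i % (j + 1) = i := Nat.div_add_mod i (j + 1)
  obtain ⟨k, hk⟩ := h
  have hrj : i % (j + 1) = j := by
    by_contra hne
    have h0 : (i + 1) % (j + 1) = 0 := by rw [hk]; exact Nat.mul_mod_right _ _
    have h2 : i + 1 = (j + 1) * (i / (j + 1)) + (i % (j + 1) + 1) := by omega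
    have h3 : (i + 1) % (j + 1) = i % (j + 1) + 1 := by
      rw [h2, Nat.mul_add_mod, Nat.mod_eq_of_lt (show i % (j + 1) + 1 < j + 1 by omega)]
    omega
  have heq : i + 1 = (j + 1) * (i / (j + 1) + 1) := by rw [Nat.mul_add, Nat.mul_one]; omega
  refine ⟨?_, ?_, hrj⟩
  · rw [heq, Nat.mul_div_cancel_left _ (show 0 < j + 1 by omega)]
  · rw [heq]; exact Nat.mul_mod_right _ _

lemma perm_pattern (hd : DH j m d) (hm : 1 ≤ m) : PatternDjU j (perm j m d hd hm) := by
  intro i k hk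
  set π := perm j m d hd hm
  have hπi : (π i : ℕ) = fval j d i.val := rfl
  have hπk : (π k : ℕ) = fval j d k.val := rfl
  by_cases hdvd : (j + 1) ∣ ((i : ℕ) + 1)
  · simp only [hdvd, iff_true]
    obtain ⟨h1, h2, h3⟩ := div_mod_succ_of_dvd hdvd
    have hkm : (k : ℕ) / (j + 1) < m := blk_lt k.isLt
    have hkm' : (i : ℕ) / (j + 1) + 1 < m := by rw [← h1, ← hk]; exact hkm
    have hfk : fval j d k.val = c d ((i : ℕ) / (j + 1) + 1) - 1 := by
      rw [fval, hk, h1, h2]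
      exact kth_T_zero hd hkm'
    have hfi : fval j d i.val < c d ((i : ℕ) / (j + 1)) := fval_lt_c hd i.isLt
    have hcc : c d ((i : ℕ) / (j + 1)) < c d ((i : ℕ) / (j + 1) + 1) := c_lt_c d (by omega)
    show π i < π k
    rw [Fin.lt_iff_val_lt_val, hπi, hπk, hfk]
    omega
  · simp only [hdvd, iff_false, not_lt]
    obtain ⟨h1, h2⟩ := div_mod_succ_of_not_dvd hdvd
    have : fval j d k.val < fval j d i.val := by
      rw [fval, fval, hk, h1, h2]
      apply kth_strict_anti (by omega)
      have hc := (T_card hd (blk_lt i.isLt)).2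
      have hmlt : ((i : ℕ) + 1) % (j + 1) < j + 1 := Nat.mod_lt _ (by omega)
      omega
    apply le_of_lt
    rw [Fin.lt_iff_val_lt_val, hπi, hπk]
    exact this

lemma perm_avoids (hd : DH j m d) (hm : 1 ≤ m) : Avoids312 (perm j m d hd hm) := by
  rintro ⟨i, p, q, hip, hpq, h1, h2⟩
  set π := perm j m d hd hm
  rw [Fin.lt_iff_val_lt_val] at hip hpq h1 h2
  have hπ : ∀ x : Fin ((j + 1) * m), (π x : ℕ) = fval j d x.val := fun _ => rfl
  rw [hπ, hπ] at h1
  rw [hπ, hπ] at h2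
  set a := (i : ℕ) / (j + 1) with ha
  set a' := (p : ℕ) / (j + 1) with ha'
  set b := (q : ℕ) / (j + 1) with hb
  have haa' : a ≤ a' := Nat.div_le_div_right (le_of_lt hip)
  have ha'b : a' ≤ b := Nat.div_le_div_right (le_of_lt hpq)
  rcases Nat.eq_or_lt_of_le ha'b with heq | hlt
  · -- same block: p, q in block a' = b, p < q means mod p < mod q, so fval q < fval p
    have hmodlt : (p : ℕ) % (j + 1) < (q : ℕ) % (j + 1) := by
      have e1 : (j + 1) * a' + (p : ℕ) % (j + 1) = (p : ℕ) := by
        rw [ha']; exact Nat.div_add_mod _ _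
      have e2 : (j + 1) * b + (q : ℕ) % (j + 1) = (q : ℕ) := by
        rw [hb]; exact Nat.div_add_mod _ _
      have e3 : (j + 1) * a' = (j + 1) * b := by rw [heq]
      omega
    have : fval j d q.val < fval j d p.val := by
      rw [fval, fval, ← ha', ← hb, ← heq]
      exact kth_strict_anti hmodlt (by have := res_lt_card hd q.isLt; rw [← hb, ← heq] at *; omega)
    omega
  · -- different blocks: stack lemma
    have hviq : fval j d q.val < c d a' := by
      have : fval j d i.val < c d a := fval_lt_c hd i.isLt
      have : c d a ≤ c d a' := c_mono d haa'
      omega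
    have := stack_lemma hd (x := fval j d p.val) (v := fval j d q.val) hlt
      (by rw [ha'] at *; exact fval_mem_V hd p.isLt)
      (by rw [hb] at *; exact fval_mem_T hd q.isLt) hviq
    omega

end Perm
end P312

namespace P312

section Reverse

variable {j m : ℕ}

lemma pos_bound {t r : ℕ} (ht : t < m) (hr : r ≤ j) : (j + 1) * t + r < (j + 1) * m := by
  have h1 : (j + 1) * (t + 1) ≤ (j + 1) * m := Nat.mul_le_mul_left _ (by omega)
  have h2 : (j + 1) * (t + 1) = (j + 1) * t + (j + 1) := by ring
  omega

variable (π : Equiv.Perm (Fin ((j + 1) * m)))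

/-- the permutation as a function on `ℕ` -/
def pv (x : ℕ) : ℕ := if h : x < (j + 1) * m then (π ⟨x, h⟩ : ℕ) else 0

lemma pv_eq {x : ℕ} (h : x < (j + 1) * m) : pv π x = (π ⟨x, h⟩ : ℕ) := dif_pos h

lemma pv_lt {x : ℕ} (h : x < (j + 1) * m) : pv π x < (j + 1) * m := by
  rw [pv_eq π h]; exact (π ⟨x, h⟩).isLt

lemma pv_inj {x y : ℕ} (hx : x < (j + 1) * m) (hy : y < (j + 1) * m)
    (h : pv π x = pv π y) : x = y := by
  rw [pv_eq π hx, pv_eq π hy] at h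
  have := π.injective (Fin.ext h)
  simpa using congrArg Fin.val this

variable {π}

lemma pv_lt_pv_of_perm_lt {x y : ℕ} (hx : x < (j + 1) * m) (hy : y < (j + 1) * m)
    (h : π ⟨x, hx⟩ < π ⟨y, hy⟩) : pv π x < pv π y := by
  rw [pv_eq π hx, pv_eq π hy]
  exact h

variable (hA : Avoids312 π) (hP : PatternDjU j π) (hj : 1 ≤ j) (hm : 1 ≤ m)

lemma desc_step (hP : PatternDjU j π) {t r : ℕ} (ht : t < m) (hr : r < j) :
    pv π ((j + 1) * t + (r + 1)) < pv π ((j + 1) * t + r) := by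
  have h1 : (j + 1) * t + r < (j + 1) * m := pos_bound ht (by omega)
  have h2 : (j + 1) * t + (r + 1) < (j + 1) * m := pos_bound ht (by omega)
  have hiff := hP ⟨(j + 1) * t + r, h1⟩ ⟨(j + 1) * t + (r + 1), h2⟩ rfl
  have hnd : ¬ (j + 1) ∣ ((j + 1) * t + r + 1) := by
    intro hd
    have h3 : (j + 1) * t + r + 1 = (j + 1) * t + (r + 1) := by omega
    rw [h3] at hd
    have := (Nat.dvd_add_right (Dvd.intro t rfl)).1 hd
    have := Nat.le_of_dvd (by omega) this
    omega
  simp only [hnd, iff_false, not_lt] at hiff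
  have hne : π ⟨(j + 1) * t + (r + 1), h2⟩ ≠ π ⟨(j + 1) * t + r, h1⟩ := by
    intro h
    have := π.injective h
    simp [Fin.ext_iff] at this
  exact pv_lt_pv_of_perm_lt h2 h1 (lt_of_le_of_ne hiff hne)

lemma desc (hP : PatternDjU j π) {t r r' : ℕ} (ht : t < m) (hr : r < r') (hr' : r' ≤ j) :
    pv π ((j + 1) * t + r') < pv π ((j + 1) * t + r) := by
  induction r' with
  | zero => omega
  | succ r'' ih =>
      rcases Nat.eq_or_lt_of_le hr with heq | hlt
      · rw [← heq]
        exact desc_step hP ht (by omega)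
      · exact lt_trans (desc_step hP ht (by omega)) (ih (by omega) (by omega))

lemma desc_le (hP : PatternDjU j π) {t r : ℕ} (ht : t < m) (hr : r ≤ j) :
    pv π ((j + 1) * t + r) ≤ pv π ((j + 1) * t) := by
  rcases Nat.eq_zero_or_pos r with rfl | hpos
  · simp
  · have := desc hP ht (show 0 < r by omega) hr
    simpa using this.le

lemma asc (hP : PatternDjU j π) {t : ℕ} (ht : t + 1 < m) :
    pv π ((j + 1) * t + j) < pv π ((j + 1) * (t + 1)) := by
  have h1 : (j + 1) * t + j < (j + 1) * m := pos_bound (by omega) (by omega)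
  have h2 : (j + 1) * (t + 1) < (j + 1) * m := by
    have h2' : (j + 1) * (t + 1) + 0 < (j + 1) * m := pos_bound ht (by omega)
    omega
  have hval : (j + 1) * (t + 1) = (j + 1) * t + j + 1 := by ring
  have hiff := hP ⟨(j + 1) * t + j, h1⟩ ⟨(j + 1) * (t + 1), h2⟩ (by simp [hval])
  have hd : (j + 1) ∣ ((j + 1) * t + j + 1) := ⟨t + 1, by omega⟩
  simp only [hd, iff_true] at hiff
  exact pv_lt_pv_of_perm_lt h1 h2 hiff

lemma max_asc (hA : Avoids312 π) (hP : PatternDjU j π) (hj : 1 ≤ j) {t : ℕ} (ht : t + 1 < m) :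
    pv π ((j + 1) * t) < pv π ((j + 1) * (t + 1)) := by
  have h1 : (j + 1) * t < (j + 1) * m := by
    have h1' : (j + 1) * t + 0 < (j + 1) * m := pos_bound (by omega) (by omega); omega
  have h2 : (j + 1) * t + j < (j + 1) * m := pos_bound (by omega) (by omega)
  have h3 : (j + 1) * (t + 1) < (j + 1) * m := by
    have h3' : (j + 1) * (t + 1) + 0 < (j + 1) * m := pos_bound ht (by omega); omega
  by_contra hcon
  push_neg at hcon
  have hne : pv π ((j + 1) * (t + 1)) ≠ pv π ((j + 1) * t) := by
    intro h
    have heq := pv_inj π h3 h1 h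
    have hexp : (j + 1) * (t + 1) = (j + 1) * t + (j + 1) := by ring
    omega
  have hlt : pv π ((j + 1) * (t + 1)) < pv π ((j + 1) * t) := by omega
  apply hA
  refine ⟨⟨(j + 1) * t, h1⟩, ⟨(j + 1) * t + j, h2⟩, ⟨(j + 1) * (t + 1), h3⟩, ?_, ?_, ?_, ?_⟩
  · exact Fin.mk_lt_mk.2 (by omega)
  · refine Fin.mk_lt_mk.2 ?_
    have hexp : (j + 1) * (t + 1) = (j + 1) * t + (j + 1) := by ring
    omega
  · rw [Fin.lt_iff_val_lt_val]
    have := asc hP ht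
    rw [pv_eq π h2, pv_eq π h3] at this
    exact this
  · rw [Fin.lt_iff_val_lt_val]
    rw [pv_eq π h3, pv_eq π h1] at hlt
    exact hlt

lemma max_mono (hA : Avoids312 π) (hP : PatternDjU j π) (hj : 1 ≤ j) {s t : ℕ}
    (hst : s ≤ t) (ht : t < m) : pv π ((j + 1) * s) ≤ pv π ((j + 1) * t) := by
  induction t with
  | zero =>
      have : s = 0 := by omega
      subst this; exact le_refl _
  | succ t ih =>
      rcases Nat.eq_or_lt_of_le hst with rfl | hlt
      · exact le_refl _
      · exact le_trans (ih (by omega) (by omega)) (max_asc hA hP hj ht).le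

lemma le_max (hA : Avoids312 π) (hP : PatternDjU j π) (hj : 1 ≤ j) {x t : ℕ}
    (hx : x < (j + 1) * (t + 1)) (ht : t < m) : pv π x ≤ pv π ((j + 1) * t) := by
  have hq : x / (j + 1) ≤ t := by
    by_contra h
    push_neg at h
    have : (j + 1) * (t + 1) ≤ (j + 1) * (x / (j + 1)) := Nat.mul_le_mul_left _ (by omega)
    have := Nat.div_add_mod x (j + 1)
    omega
  have hxq : x = (j + 1) * (x / (j + 1)) + x % (j + 1) := (Nat.div_add_mod x (j + 1)).symm
  have hmod : x % (j + 1) ≤ j := by have := Nat.mod_lt x (show 0 < j + 1 by omega); omega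
  calc pv π x = pv π ((j + 1) * (x / (j + 1)) + x % (j + 1)) := by rw [← hxq]
    _ ≤ pv π ((j + 1) * (x / (j + 1))) := desc_le hP (by omega) hmod
    _ ≤ pv π ((j + 1) * t) := max_mono hA hP hj hq ht

lemma max_last (hA : Avoids312 π) (hP : PatternDjU j π) (hj : 1 ≤ j) (hm : 1 ≤ m) :
    pv π ((j + 1) * (m - 1)) = (j + 1) * m - 1 := by
  have hNpos : 0 < (j + 1) * m := by positivity
  have hv : (j + 1) * m - 1 < (j + 1) * m := by omega
  set w := π.symm ⟨(j + 1) * m - 1, hv⟩ with hw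
  have hπw : π w = ⟨(j + 1) * m - 1, hv⟩ := π.apply_symm_apply _
  have h1 : pv π w.val = (j + 1) * m - 1 := by
    rw [pv_eq π w.isLt]
    have : (⟨w.val, w.isLt⟩ : Fin ((j + 1) * m)) = w := Fin.ext rfl
    rw [this, hπw]
  have h2 : pv π w.val ≤ pv π ((j + 1) * (m - 1)) :=
    le_max hA hP hj
      (show (w.val : ℕ) < (j + 1) * (m - 1 + 1) by rw [Nat.sub_add_cancel hm]; exact w.isLt)
      (by omega)
  have hlt' : (j + 1) * (m - 1) + 0 < (j + 1) * m := pos_bound (by omega) (by omega)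
  have h3 : pv π ((j + 1) * (m - 1)) < (j + 1) * m := pv_lt π (by omega)
  omega

lemma max_ge (hA : Avoids312 π) (hP : PatternDjU j π) (hj : 1 ≤ j) {t : ℕ} (ht : t < m) :
    (j + 1) * (t + 1) ≤ pv π ((j + 1) * t) + 1 := by
  have hb : ∀ x : Fin ((j + 1) * (t + 1)), pv π x.val < pv π ((j + 1) * t) + 1 := by
    intro x
    have := le_max hA hP hj (x := x.val) x.isLt ht
    omega
  have hinj : Function.Injective
      (fun x : Fin ((j + 1) * (t + 1)) => (⟨pv π x.val, hb x⟩ : Fin (pv π ((j + 1) * t) + 1))) := by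
    intro x y hxy
    simp only [Fin.mk.injEq] at hxy
    have hxm : x.val < (j + 1) * m := by
      have h1 : (j + 1) * (t + 1) ≤ (j + 1) * m := Nat.mul_le_mul_left _ (by omega)
      omega
    have hym : y.val < (j + 1) * m := by
      have h1 : (j + 1) * (t + 1) ≤ (j + 1) * m := Nat.mul_le_mul_left _ (by omega)
      omega
    exact Fin.ext (pv_inj π hxm hym hxy)
  have := Fintype.card_le_of_injective _ hinj
  simpa using this

/-- the sequence extracted from a permutation -/
def dOf (j m : ℕ) (π : Equiv.Perm (Fin ((j + 1) * m))) : ℕ → ℕ := fun t =>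
  if t = 0 then pv π 0
  else if t < m then pv π ((j + 1) * t) - pv π ((j + 1) * (t - 1)) - 1 else 0

lemma dOf_support (t : ℕ) (hm : 1 ≤ m) (ht : m ≤ t) : dOf j m π t = 0 := by
  rw [dOf]
  have h1 : t ≠ 0 := by omega
  have h2 : ¬ t < m := by omega
  simp [h1, h2]

lemma S_dOf (hA : Avoids312 π) (hP : PatternDjU j π) (hj : 1 ≤ j) :
    ∀ t, t < m → S (dOf j m π) (t + 1) + (t + 1) = pv π ((j + 1) * t) + 1 := by
  intro t
  induction t with
  | zero =>
      intro _
      have : S (dOf j m π) 1 = dOf j m π 0 := by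
        rw [S, Finset.sum_range_one]
      rw [this, dOf]
      simp
  | succ t ih =>
      intro ht
      have hS := ih (by omega)
      have hmono := max_asc hA hP hj ht
      have hge := max_ge hA hP hj (show t < m by omega)
      have hexp : (j + 1) * (t + 1) = (j + 1) * t + (j + 1) := by ring
      have hstep : S (dOf j m π) (t + 2) = S (dOf j m π) (t + 1) + dOf j m π (t + 1) :=
        S_succ _ _
      have hd : dOf j m π (t + 1) =
          pv π ((j + 1) * (t + 1)) - pv π ((j + 1) * t) - 1 := by
        rw [dOf]
        simp only [Nat.succ_ne_zero, if_false, ht, if_true, Nat.add_sub_cancel]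
      rw [hstep, hd]
      omega

lemma DH_dOf (hA : Avoids312 π) (hP : PatternDjU j π) (hj : 1 ≤ j) (hm : 1 ≤ m) :
    DH j m (dOf j m π) := by
  constructor
  · have h1 := S_dOf hA hP hj (m - 1) (by omega)
    have h2 := max_last hA hP hj hm
    have h3 : m - 1 + 1 = m := by omega
    rw [h3] at h1
    rw [h2] at h1
    have h4 : (j + 1) * m = j * m + m := by ring
    omega
  · intro t ht
    have h1 := S_dOf hA hP hj t ht
    have h2 := max_ge hA hP hj ht
    have hexp : (j + 1) * (t + 1) = j * (t + 1) + (t + 1) := by ring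
    omega

end Reverse
end P312

namespace P312

section LeftInv

variable {j m : ℕ} {π : Equiv.Perm (Fin ((j + 1) * m))}

lemma kth_step (hA : Avoids312 π) (hP : PatternDjU j π) (hj : 1 ≤ j) (hm : 1 ≤ m)
    {t : ℕ} (ht : t < m)
    (hU : U j (dOf j m π) t = (Finset.range ((j + 1) * t)).image (pv π)) :
    (∀ r ≤ j, kth (T j (dOf j m π) t) r = pv π ((j + 1) * t + r)) ∧
      V j (dOf j m π) t = (Finset.range (j + 1)).image (fun r => pv π ((j + 1) * t + r)) := by
  set d := dOf j m π with hdDef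
  have hdh : DH j m d := DH_dOf hA hP hj hm
  have hc : c d t = pv π ((j + 1) * t) + 1 := by
    have hS := S_dOf hA hP hj t ht
    rw [← hdDef] at hS
    rw [c]; omega
  have hle : ∀ x, x < (j + 1) * t → x < (j + 1) * m := by
    intro x hx
    have h1 : (j + 1) * t ≤ (j + 1) * m := Nat.mul_le_mul_left _ (by omega)
    omega
  have hposr : ∀ r, r ≤ j → (j + 1) * t + r < (j + 1) * m := fun r hr => pos_bound ht hr
  have hNt : (j + 1) * t < (j + 1) * m := by have := hposr 0 (by omega); omega
  have hmaxN : pv π ((j + 1) * t) < (j + 1) * m := pv_lt π hNt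
  have hTmem : ∀ r ≤ j, pv π ((j + 1) * t + r) ∈ T j d t := by
    intro r hr
    rw [T, Finset.mem_sdiff, Finset.mem_range, hc]
    constructor
    · have := desc_le hP ht hr
      omega
    · rw [hU]
      intro hmem
      rw [Finset.mem_image] at hmem
      obtain ⟨x, hx, heq⟩ := hmem
      rw [Finset.mem_range] at hx
      have := pv_inj π (hle x hx) (hposr r hr) heq
      omega
  have hAbove : ∀ r ≤ j, (T j d t).filter (fun y => pv π ((j + 1) * t + r) < y) =
      (Finset.range r).image (fun r' => pv π ((j + 1) * t + r')) := by
    intro r hr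
    ext y
    simp only [Finset.mem_filter, Finset.mem_image, Finset.mem_range]
    constructor
    · rintro ⟨hyT, hyGt⟩
      have hyT' := hyT
      rw [T, Finset.mem_sdiff, Finset.mem_range, hc] at hyT'
      obtain ⟨hylt, hyU⟩ := hyT'
      have hyN : y < (j + 1) * m := by omega
      set w := π.symm ⟨y, hyN⟩ with hw
      have hπw : π w = ⟨y, hyN⟩ := π.apply_symm_apply _
      have e2 : (π w : ℕ) = y := by rw [hπw]
      have hpvw : pv π w.val = y := by
        rw [pv_eq π w.isLt]
        have h1 : (⟨w.val, w.isLt⟩ : Fin ((j + 1) * m)) = w := Fin.ext rfl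
        rw [h1, e2]
      have hwge : (j + 1) * t ≤ w.val := by
        by_contra hcon
        push_neg at hcon
        apply hyU
        rw [hU, Finset.mem_image]
        exact ⟨w.val, Finset.mem_range.2 hcon, hpvw⟩
      rcases Nat.lt_or_ge w.val ((j + 1) * (t + 1)) with hcase | hcase
      · -- same block
        have hexp : (j + 1) * (t + 1) = (j + 1) * t + (j + 1) := by ring
        set r'' := w.val - (j + 1) * t with hr''
        have hwval : w.val = (j + 1) * t + r'' := by omega
        have hr''j : r'' ≤ j := by omega
        have hyr'' : y = pv π ((j + 1) * t + r'') := by rw [← hwval, hpvw]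
        refine ⟨r'', ?_, hyr''.symm⟩
        by_contra hcon
        push_neg at hcon
        rcases Nat.eq_or_lt_of_le hcon with heq | hlt
        · rw [← heq] at hyr''
          omega
        · have := desc hP ht hlt hr''j
          omega
      · -- later block: 312 pattern
        exfalso
        have hexp : (j + 1) * (t + 1) = (j + 1) * t + (j + 1) := by ring
        have hmidlt : pv π ((j + 1) * t + j) < y := by
          rcases Nat.eq_or_lt_of_le hr with rfl | hlt
          · omega
          · have := desc hP ht hlt (le_refl j)
            omega
        have hylt' : y < pv π ((j + 1) * t) := by
          have hne : y ≠ pv π ((j + 1) * t) := by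
            intro heq
            have hxx : pv π w.val = pv π ((j + 1) * t) := by rw [hpvw, heq]
            have := pv_inj π w.isLt hNt hxx
            omega
          omega
        apply hA
        refine ⟨⟨(j + 1) * t, hNt⟩, ⟨(j + 1) * t + j, hposr j (le_refl j)⟩, w, ?_, ?_, ?_, ?_⟩
        · exact Fin.mk_lt_mk.2 (by omega)
        · show ((j + 1) * t + j) < w.val
          omega
        · show (π ⟨(j + 1) * t + j, hposr j (le_refl j)⟩ : ℕ) < (π w : ℕ)
          rw [← pv_eq π (hposr j (le_refl j)), e2]
          exact hmidlt
        · show (π w : ℕ) < (π ⟨(j + 1) * t, hNt⟩ : ℕ)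
          rw [← pv_eq π hNt, e2]
          exact hylt'
    · rintro ⟨r', hr', hry⟩
      subst hry
      refine ⟨hTmem r' (by omega), ?_⟩
      exact desc hP ht hr' hr
  have hCard : ∀ r ≤ j, cardAbove (T j d t) (pv π ((j + 1) * t + r)) = r := by
    intro r hr
    rw [cardAbove, hAbove r hr, Finset.card_image_of_injOn, Finset.card_range]
    intro x hx y hy hxy
    rw [Finset.mem_coe, Finset.mem_range] at hx hy
    have := pv_inj π (hposr x (by omega)) (hposr y (by omega)) hxy
    omega
  have hcardT : j + 1 ≤ (T j d t).card := (T_card hdh ht).2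
  have hkth : ∀ r ≤ j, kth (T j d t) r = pv π ((j + 1) * t + r) := by
    intro r hr
    exact kth_eq_of (by omega) (hTmem r hr) (hCard r hr)
  refine ⟨hkth, ?_⟩
  ext y
  rw [V, mem_top_iff]
  simp only [Finset.mem_image, Finset.mem_range]
  constructor
  · rintro ⟨hyT, hyLt⟩
    refine ⟨cardAbove (T j d t) y, hyLt, ?_⟩
    have := hkth (cardAbove (T j d t) y) (by omega)
    rw [← this]
    exact kth_eq_of (by omega) hyT rfl
  · rintro ⟨r, hr, rfl⟩
    exact ⟨hTmem r (by omega), by rw [hCard r (by omega)]; omega⟩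

lemma U_eq_Uπ (hA : Avoids312 π) (hP : PatternDjU j π) (hj : 1 ≤ j) (hm : 1 ≤ m) :
    ∀ t ≤ m, U j (dOf j m π) t = (Finset.range ((j + 1) * t)).image (pv π) := by
  intro t
  induction t with
  | zero => intro _; simp [U]
  | succ t ih =>
      intro ht
      have hIH := ih (by omega)
      have hV := (kth_step hA hP hj hm (by omega) hIH).2
      rw [U_succ, hIH, hV]
      ext y
      simp only [Finset.mem_union, Finset.mem_image, Finset.mem_range]
      have hexp : (j + 1) * (t + 1) = (j + 1) * t + (j + 1) := by ring
      constructor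
      · rintro (⟨x, hx, rfl⟩ | ⟨r, hr, rfl⟩)
        · exact ⟨x, by omega, rfl⟩
        · exact ⟨(j + 1) * t + r, by omega, rfl⟩
      · rintro ⟨x, hx, rfl⟩
        rcases Nat.lt_or_ge x ((j + 1) * t) with hcase | hcase
        · exact Or.inl ⟨x, hcase, rfl⟩
        · refine Or.inr ⟨x - (j + 1) * t, by omega, ?_⟩
          congr 1
          omega

lemma perm_dOf_eq (hA : Avoids312 π) (hP : PatternDjU j π) (hj : 1 ≤ j) (hm : 1 ≤ m) :
    perm j m (dOf j m π) (DH_dOf hA hP hj hm) hm = π := by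
  apply Equiv.ext
  intro i
  apply Fin.ext
  have h1 : (perm j m (dOf j m π) (DH_dOf hA hP hj hm) hm i : ℕ) = fval j (dOf j m π) i.val :=
    rfl
  rw [h1, fval]
  have ht : i.val / (j + 1) < m := blk_lt i.isLt
  have hr : i.val % (j + 1) ≤ j := by
    have := Nat.mod_lt i.val (show 0 < j + 1 by omega); omega
  have hkth := (kth_step hA hP hj hm ht (U_eq_Uπ hA hP hj hm _ (by omega))).1
  rw [hkth _ hr]
  have hdm : (j + 1) * (i.val / (j + 1)) + i.val % (j + 1) = i.val := Nat.div_add_mod _ _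
  rw [hdm, pv_eq π i.isLt]

end LeftInv
end P312

namespace P312

section RightInv

variable {j m : ℕ} {d : ℕ → ℕ}

lemma pv_perm_block (hd : DH j m d) (hm : 1 ≤ m) {t : ℕ} (ht : t < m) :
    pv (perm j m d hd hm) ((j + 1) * t) = c d t - 1 := by
  have hx : (j + 1) * t < (j + 1) * m := by
    have := pos_bound (r := 0) ht (Nat.zero_le j); omega
  rw [pv_eq _ hx]
  have h1 : (perm j m d hd hm ⟨(j + 1) * t, hx⟩ : ℕ) = fval j d ((j + 1) * t) := rfl
  rw [h1, fval, Nat.mul_div_cancel_left t (show 0 < j + 1 by omega), Nat.mul_mod_right]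
  exact kth_T_zero hd ht

lemma dOf_perm_eq (hd : DH j m d) (hsupp : ∀ t, m ≤ t → d t = 0) (hm : 1 ≤ m) :
    dOf j m (perm j m d hd hm) = d := by
  funext t
  rcases Nat.lt_or_ge t m with ht | ht
  · rcases Nat.eq_zero_or_pos t with rfl | htpos
    · rw [dOf]
      simp only [if_true, reduceIte]
      have hpb : pv (perm j m d hd hm) 0 = c d 0 - 1 := by
        have := pv_perm_block hd hm (show 0 < m by omega)
        simpa using this
      rw [hpb]
      have hc0 : c d 0 = d 0 + 1 := by
        rw [c, S, Finset.sum_range_one]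
      omega
    · rw [dOf]
      have h1 : t ≠ 0 := by omega
      simp only [h1, if_false, ht, if_true]
      rw [pv_perm_block hd hm ht, pv_perm_block hd hm (show t - 1 < m by omega)]
      have hc1 : c d t = c d (t - 1) + d t + 1 := by
        have ht1 : t - 1 + 1 = t := by omega
        rw [c, c, ht1]
        have : S d (t + 1) = S d t + d t := S_succ d t
        omega
      have hc2 : 1 ≤ c d (t - 1) := by
        have := hd.c_ge (show t - 1 < m by omega)
        have hexp : 0 < (j + 1) * (t - 1 + 1) := by positivity
        omega
      omega
  · rw [dOf_support t hm ht, hsupp t ht]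

end RightInv

/-- Part I: the permutations are in bijection with the `D`-sequences. -/
noncomputable def permDEquiv (j m : ℕ) (hj : 1 ≤ j) (hm : 1 ≤ m) :
    {π : Equiv.Perm (Fin ((j + 1) * m)) // Avoids312 π ∧ PatternDjU j π} ≃
      {d : ℕ → ℕ // (∀ t, m ≤ t → d t = 0) ∧ DH j m d} where
  toFun p := ⟨dOf j m p.1, fun t ht => dOf_support t hm ht, DH_dOf p.2.1 p.2.2 hj hm⟩
  invFun q := ⟨perm j m q.1 q.2.2 hm, perm_avoids q.2.2 hm, perm_pattern q.2.2 hm⟩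
  left_inv p := Subtype.ext (perm_dOf_eq p.2.1 p.2.2 hj hm)
  right_inv q := Subtype.ext (dOf_perm_eq q.2.2 q.2.1 hm)

end P312

namespace P312

open scoped Fin.NatCast Fin.CommRing

section Cycle

variable (j m : ℕ)

/-- number of marked positions among the first `p` letters of the cyclic word -/
def A (s : Finset (Fin ((j + 1) * m + 1))) (p : ℕ) : ℕ :=
  ((Finset.range p).filter (fun i : ℕ => ((i : Fin ((j + 1) * m + 1)) ∈ s))).card

/-- height of the lattice path after `p` letters -/
def Tz (s : Finset (Fin ((j + 1) * m + 1))) (p : ℕ) : ℤ :=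
  (j + 1) * (A j m s p) - p

def Good (s : Finset (Fin ((j + 1) * m + 1))) : Prop :=
  ∀ p, p < (j + 1) * m + 1 → 0 ≤ Tz j m s p

def GoodAt (s : Finset (Fin ((j + 1) * m + 1))) (p : ℕ) : Prop :=
  ∀ t, t < (j + 1) * m + 1 → Tz j m s p ≤ Tz j m s (p + t)

def rot (r : Fin ((j + 1) * m + 1)) (s : Finset (Fin ((j + 1) * m + 1))) :
    Finset (Fin ((j + 1) * m + 1)) := s.image (· + r)

variable {j m}

lemma A_zero (s) : A j m s 0 = 0 := by simp [A]

lemma A_succ (s) (p : ℕ) :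
    A j m s (p + 1) = A j m s p + (if ((p : Fin ((j + 1) * m + 1))) ∈ s then 1 else 0) := by
  rw [A, A, Finset.range_add_one, Finset.filter_insert]
  split
  · rw [Finset.card_insert_of_notMem (by simp)]
  · omega

lemma A_full (s : Finset (Fin ((j + 1) * m + 1))) : A j m s ((j + 1) * m + 1) = s.card := by
  rw [A]
  refine Finset.card_bij (fun i _ => ((i : Fin ((j + 1) * m + 1)))) ?_ ?_ ?_
  · intro a ha
    rw [Finset.mem_filter] at ha
    exact ha.2
  · intro a ha b hb h
    rw [Finset.mem_filter, Finset.mem_range] at ha hb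
    have := congrArg Fin.val h
    rwa [Fin.val_cast_of_lt ha.1, Fin.val_cast_of_lt hb.1] at this
  · intro x hx
    refine ⟨x.val, ?_, ?_⟩
    · rw [Finset.mem_filter, Finset.mem_range]
      exact ⟨x.isLt, by rwa [Fin.cast_val_eq_self]⟩
    · show ((x.val : ℕ) : Fin ((j + 1) * m + 1)) = x
      rw [Fin.cast_val_eq_self]

lemma cast_add_full (p : ℕ) :
    ((p + ((j + 1) * m + 1) : ℕ) : Fin ((j + 1) * m + 1)) = (p : Fin ((j + 1) * m + 1)) := by
  rw [Nat.cast_add, Fin.natCast_self, add_zero]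

lemma A_add_full (s : Finset (Fin ((j + 1) * m + 1))) (p : ℕ) :
    A j m s (p + ((j + 1) * m + 1)) = A j m s p + s.card := by
  induction p with
  | zero => rw [Nat.zero_add, A_full, A_zero, Nat.zero_add]
  | succ p ih =>
      have h1 : p + 1 + ((j + 1) * m + 1) = (p + ((j + 1) * m + 1)) + 1 := by omega
      rw [h1, A_succ, ih, A_succ, cast_add_full]
      omega

lemma Tz_add_full {s : Finset (Fin ((j + 1) * m + 1))} (hs : s.card = m) (p : ℕ) :
    Tz j m s (p + ((j + 1) * m + 1)) = Tz j m s p - 1 := by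
  rw [Tz, Tz, A_add_full, hs]
  push_cast
  ring

lemma mem_rot {r : Fin ((j + 1) * m + 1)} {s} {x : Fin ((j + 1) * m + 1)} :
    x ∈ rot j m r s ↔ x - r ∈ s := by
  rw [rot, Finset.mem_image]
  constructor
  · rintro ⟨y, hy, rfl⟩
    simpa using hy
  · intro h
    exact ⟨x - r, h, by ring⟩

lemma card_rot (r : Fin ((j + 1) * m + 1)) (s) : (rot j m r s).card = s.card :=
  Finset.card_image_of_injective _ (add_left_injective r)

lemma rot_rot (r r' : Fin ((j + 1) * m + 1)) (s) :
    rot j m r' (rot j m r s) = rot j m (r + r') s := by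
  rw [rot, rot, rot, Finset.image_image]
  apply Finset.image_congr
  intro x _
  simp [add_assoc]

lemma rot_zero (s) : rot j m 0 s = s := by
  rw [rot]
  simp

lemma A_rot (r : Fin ((j + 1) * m + 1)) (s) (t : ℕ) :
    A j m (rot j m r s) t + A j m s ((-r : Fin ((j + 1) * m + 1)).val) =
      A j m s ((-r : Fin ((j + 1) * m + 1)).val + t) := by
  induction t with
  | zero => simp [A_zero]
  | succ t ih =>
      have h1 : (-r : Fin ((j + 1) * m + 1)).val + (t + 1) =
          ((-r : Fin ((j + 1) * m + 1)).val + t) + 1 := by omega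
      rw [h1, A_succ, A_succ, ← ih]
      have h2 : (((((-r : Fin ((j + 1) * m + 1)).val + t) : ℕ)) : Fin ((j + 1) * m + 1)) ∈ s ↔
          ((t : Fin ((j + 1) * m + 1))) ∈ rot j m r s := by
        rw [mem_rot]
        have h3 : ((((-r : Fin ((j + 1) * m + 1)).val + t : ℕ)) : Fin ((j + 1) * m + 1)) =
            (t : Fin ((j + 1) * m + 1)) - r := by
          push_cast
          ring
        rw [h3]
      have h4 : (if (((((-r : Fin ((j + 1) * m + 1)).val + t) : ℕ)) :
            Fin ((j + 1) * m + 1)) ∈ s then 1 else 0) =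
          (if ((t : Fin ((j + 1) * m + 1))) ∈ rot j m r s then 1 else 0) := by
        by_cases hc : ((t : Fin ((j + 1) * m + 1))) ∈ rot j m r s
        · rw [if_pos hc, if_pos (h2.2 hc)]
        · rw [if_neg hc, if_neg (fun hx => hc (h2.1 hx))]
      rw [h4]
      omega

lemma Tz_rot (r : Fin ((j + 1) * m + 1)) (s) (t : ℕ) :
    Tz j m (rot j m r s) t =
      Tz j m s ((-r : Fin ((j + 1) * m + 1)).val + t) -
        Tz j m s ((-r : Fin ((j + 1) * m + 1)).val) := by
  have hA := A_rot r s t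
  rw [Tz, Tz, Tz]
  have hcast : (A j m (rot j m r s) t : ℤ) =
      (A j m s ((-r : Fin ((j + 1) * m + 1)).val + t) : ℤ) -
        (A j m s ((-r : Fin ((j + 1) * m + 1)).val) : ℤ) := by
    have := congrArg (fun x : ℕ => (x : ℤ)) hA
    push_cast at this
    omega
  rw [hcast]
  push_cast
  ring

lemma good_rot_iff (r : Fin ((j + 1) * m + 1)) (s) :
    Good j m (rot j m r s) ↔ GoodAt j m s ((-r : Fin ((j + 1) * m + 1)).val) := by
  constructor
  · intro h t ht
    have := h t ht
    rw [Tz_rot] at this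
    omega
  · intro h p hp
    rw [Tz_rot]
    have := h p hp
    omega

lemma exists_goodAt {s : Finset (Fin ((j + 1) * m + 1))} (hs : s.card = m) :
    ∃ p, p < (j + 1) * m + 1 ∧ GoodAt j m s p := by
  obtain ⟨q0, hq0, hq0min⟩ := Finset.exists_min_image (Finset.range ((j + 1) * m + 1))
    (Tz j m s) ⟨0, Finset.mem_range.2 (by omega)⟩
  rw [Finset.mem_range] at hq0
  have hex : ∃ q, q < (j + 1) * m + 1 ∧ Tz j m s q = Tz j m s q0 := ⟨q0, hq0, rfl⟩
  refine ⟨Nat.find hex, (Nat.find_spec hex).1, ?_⟩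
  intro t ht
  obtain ⟨hpL, hpμ⟩ := Nat.find_spec hex
  have hmin : ∀ q, q < (j + 1) * m + 1 → Tz j m s q0 ≤ Tz j m s q := fun q hq =>
    hq0min q (Finset.mem_range.2 hq)
  rcases Nat.lt_or_ge (Nat.find hex + t) ((j + 1) * m + 1) with hcase | hcase
  · rw [hpμ]
    exact hmin _ hcase
  · obtain ⟨q, hq⟩ : ∃ q, Nat.find hex + t = q + ((j + 1) * m + 1) :=
      ⟨Nat.find hex + t - ((j + 1) * m + 1), by omega⟩
    have hqp : q < Nat.find hex := by omega
    have hqL : q < (j + 1) * m + 1 := by omega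
    have h1 : Tz j m s (Nat.find hex + t) = Tz j m s q - 1 := by
      rw [hq]
      exact Tz_add_full hs q
    have h2 : Tz j m s q ≠ Tz j m s q0 := fun hcon => (Nat.find_min hex hqp) ⟨hqL, hcon⟩
    have h3 := hmin _ hqL
    rw [hpμ, h1]
    omega

lemma goodAt_unique {s : Finset (Fin ((j + 1) * m + 1))} (hs : s.card = m)
    {p p' : ℕ} (hp : p < (j + 1) * m + 1) (hp' : p' < (j + 1) * m + 1)
    (hg : GoodAt j m s p) (hg' : GoodAt j m s p') : p = p' := by
  have key : ∀ a b, a < (j + 1) * m + 1 → b < (j + 1) * m + 1 → a < b →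
      GoodAt j m s a → GoodAt j m s b → False := by
    intro a b haL hbL hab hga hgb
    have h1 := hga (b - a) (by omega)
    have e1 : a + (b - a) = b := by omega
    rw [e1] at h1
    have h2 := hgb (a + ((j + 1) * m + 1) - b) (by omega)
    have e2 : b + (a + ((j + 1) * m + 1) - b) = a + ((j + 1) * m + 1) := by omega
    rw [e2] at h2
    have h3 : Tz j m s (a + ((j + 1) * m + 1)) = Tz j m s a - 1 := Tz_add_full hs a
    rw [h3] at h2
    omega
  rcases lt_trichotomy p p' with h | h | h
  · exact absurd (key p p' hp hp' h hg hg') (fun h => h)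
  · exact h
  · exact absurd (key p' p hp' hp h hg' hg) (fun h => h)

variable (j m)

/-- Good cyclic words -/
def GoodSet := {s : Finset (Fin ((j + 1) * m + 1)) // s.card = m ∧ Good j m s}

noncomputable def rotEquiv :
    (Fin ((j + 1) * m + 1)) × GoodSet j m ≃ {s : Finset (Fin ((j + 1) * m + 1)) // s.card = m} := by
  apply Equiv.ofBijective
    (fun x => (⟨rot j m x.1 x.2.1, by rw [card_rot]; exact x.2.2.1⟩ :
      {s : Finset (Fin ((j + 1) * m + 1)) // s.card = m}))
  constructor
  · rintro ⟨r₁, g₁⟩ ⟨r₂, g₂⟩ heq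
    simp only [Subtype.mk.injEq] at heq
    have hg₁ : g₁.1 = rot j m (-r₁) (rot j m r₁ g₁.1) := by
      rw [rot_rot, add_neg_cancel, rot_zero]
    have hg₂ : g₂.1 = rot j m (-r₂) (rot j m r₂ g₂.1) := by
      rw [rot_rot, add_neg_cancel, rot_zero]
    set s := rot j m r₁ g₁.1 with hsdef
    have hscard : s.card = m := by rw [card_rot]; exact g₁.2.1
    have hGood₁ : Good j m (rot j m (-r₁) s) := by rw [← hg₁]; exact g₁.2.2
    have hGood₂ : Good j m (rot j m (-r₂) s) := by rw [heq, ← hg₂]; exact g₂.2.2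
    rw [good_rot_iff] at hGood₁ hGood₂
    rw [neg_neg] at hGood₁ hGood₂
    have hval : r₁.val = r₂.val := goodAt_unique hscard r₁.isLt r₂.isLt hGood₁ hGood₂
    have hr : r₁ = r₂ := Fin.ext hval
    subst hr
    refine Prod.ext rfl (Subtype.ext ?_)
    rw [hg₁, hg₂, ← heq]
  · rintro ⟨s, hs⟩
    obtain ⟨p, hpL, hGp⟩ := exists_goodAt hs
    set r : Fin ((j + 1) * m + 1) := (p : Fin ((j + 1) * m + 1)) with hr
    have hrval : ((- - r : Fin ((j + 1) * m + 1))).val = p := by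
      rw [neg_neg, hr, Fin.val_cast_of_lt hpL]
    have hGoodg : Good j m (rot j m (-r) s) := by
      rw [good_rot_iff, hrval]
      exact hGp
    refine ⟨⟨r, ⟨rot j m (-r) s, by rw [card_rot]; exact hs, hGoodg⟩⟩, ?_⟩
    apply Subtype.ext
    show rot j m r (rot j m (-r) s) = s
    rw [rot_rot, neg_add_cancel, rot_zero]

lemma card_goodSet_mul :
    ((j + 1) * m + 1) * Nat.card (GoodSet j m) = ((j + 1) * m + 1).choose m := by
  have h1 := Nat.card_congr (rotEquiv j m)
  rw [Nat.card_prod] at h1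
  have h2 : Nat.card (Fin ((j + 1) * m + 1)) = (j + 1) * m + 1 := by
    rw [Nat.card_eq_fintype_card, Fintype.card_fin]
  have h3 : Nat.card {s : Finset (Fin ((j + 1) * m + 1)) // s.card = m} =
      ((j + 1) * m + 1).choose m := by
    rw [Nat.card_eq_fintype_card, Fintype.card_finset_len, Fintype.card_fin]
  rw [h2, h3] at h1
  exact h1

end Cycle
end P312

namespace P312

open scoped Fin.NatCast Fin.CommRing

section ED

variable {j m : ℕ}

/-- Hypotheses for membership in `E` (the reversed sequences). -/
structure EH (j m : ℕ) (e : ℕ → ℕ) : Prop where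
  sum_eq : S e m = j * m
  partial_le : ∀ t < m, S e (t + 1) ≤ j * (t + 1)

def revMap (m : ℕ) (d : ℕ → ℕ) : ℕ → ℕ := fun t => if t < m then d (m - 1 - t) else 0

lemma S_revMap_eq (d : ℕ → ℕ) : S (revMap m d) m = S d m := by
  rw [S, S]
  rw [show ∑ i ∈ Finset.range m, revMap m d i = ∑ i ∈ Finset.range m, d (m - 1 - i) from
    Finset.sum_congr rfl fun i hi => if_pos (Finset.mem_range.1 hi)]
  exact Finset.sum_range_reflect d m

lemma rev_sum_split {d : ℕ → ℕ} {t : ℕ} (ht : t < m) :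
    S (revMap m d) (t + 1) + S d (m - 1 - t) = S d m := by
  have h1 : S (revMap m d) (t + 1) = ∑ i ∈ Finset.range (t + 1), d (m - 1 - i) :=
    Finset.sum_congr rfl fun i hi => if_pos (by
      rw [Finset.mem_range] at hi; omega)
  have h2 : ∑ i ∈ Finset.range (t + 1), d (m - 1 - i) =
      ∑ x ∈ Finset.Ico (m - 1 - t) m, d x := by
    refine Finset.sum_bij' (fun a _ => m - 1 - a) (fun a _ => m - 1 - a) ?_ ?_ ?_ ?_ ?_
    · intro a ha
      rw [Finset.mem_range] at ha
      rw [Finset.mem_Ico]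
      omega
    · intro a ha
      rw [Finset.mem_Ico] at ha
      rw [Finset.mem_range]
      omega
    · intro a ha
      rw [Finset.mem_range] at ha
      omega
    · intro a ha
      rw [Finset.mem_Ico] at ha
      omega
    · intro a _
      rfl
  have h3 : S d (m - 1 - t) + ∑ x ∈ Finset.Ico (m - 1 - t) m, d x = S d m := by
    rw [S, S, Finset.range_eq_Ico, Finset.range_eq_Ico]
    exact Finset.sum_Ico_consecutive d (m := 0) (n := m - 1 - t) (k := m) (by omega) (by omega)
  omega

lemma revMap_invol {d : ℕ → ℕ} (hsupp : ∀ t, m ≤ t → d t = 0) :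
    revMap m (revMap m d) = d := by
  funext t
  rcases Nat.lt_or_ge t m with ht | ht
  · rw [revMap]
    simp only [ht, if_true]
    rw [revMap]
    have h1 : m - 1 - t < m := by omega
    simp only [h1, if_true]
    congr 1
    omega
  · rw [revMap]
    have h1 : ¬ t < m := by omega
    simp only [h1, if_false]
    exact (hsupp t ht).symm

lemma DH_to_EH (hd : DH j m d) : EH j m (revMap m d) := by
  constructor
  · rw [S_revMap_eq, hd.sum_eq]
  · intro t ht
    have key := rev_sum_split (d := d) ht
    have hge : j * (m - 1 - t) ≤ S d (m - 1 - t) := by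
      rcases Nat.eq_zero_or_pos (m - 1 - t) with h0 | h0
      · rw [h0]
        simp [S]
      · obtain ⟨t', ht'⟩ : ∃ t', m - 1 - t = t' + 1 := ⟨m - 1 - t - 1, by omega⟩
        rw [ht']
        exact hd.partial_ge t' (by omega)
    have hmul : j * (m - 1 - t) + j * (t + 1) = j * m := by
      rw [← Nat.mul_add]
      congr 1
      omega
    have hsum := hd.sum_eq
    omega

lemma EH_to_DH {e : ℕ → ℕ} (he : EH j m e) : DH j m (revMap m e) := by
  constructor
  · rw [S_revMap_eq, he.sum_eq]
  · intro t ht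
    have key := rev_sum_split (d := e) ht
    have hle : S e (m - 1 - t) ≤ j * (m - 1 - t) := by
      rcases Nat.eq_zero_or_pos (m - 1 - t) with h0 | h0
      · rw [h0]
        simp [S]
      · obtain ⟨t', ht'⟩ : ∃ t', m - 1 - t = t' + 1 := ⟨m - 1 - t - 1, by omega⟩
        rw [ht']
        exact he.partial_le t' (by omega)
    have hmul : j * (m - 1 - t) + j * (t + 1) = j * m := by
      rw [← Nat.mul_add]
      congr 1
      omega
    have hsum := he.sum_eq
    omega

variable (j m)

def DSet := {d : ℕ → ℕ // (∀ t, m ≤ t → d t = 0) ∧ DH j m d}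
def ESet := {e : ℕ → ℕ // (∀ t, m ≤ t → e t = 0) ∧ EH j m e}

def DEEquiv : DSet j m ≃ ESet j m where
  toFun q := ⟨revMap m q.1, fun t ht => by rw [revMap]; simp [show ¬ t < m by omega],
    DH_to_EH q.2.2⟩
  invFun q := ⟨revMap m q.1, fun t ht => by rw [revMap]; simp [show ¬ t < m by omega],
    EH_to_DH q.2.2⟩
  left_inv q := Subtype.ext (revMap_invol q.2.1)
  right_inv q := Subtype.ext (revMap_invol q.2.1)

end ED

section EG

variable {j m : ℕ}

def uOf (e : ℕ → ℕ) (t : ℕ) : ℕ := t + S e t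

lemma uOf_mono (e : ℕ → ℕ) : StrictMono (uOf e) := by
  apply strictMono_nat_of_lt_succ
  intro t
  rw [uOf, uOf, S_succ]
  omega

lemma uOf_lt {e : ℕ → ℕ} (he : EH j m e) {t : ℕ} (ht : t < m) : uOf e t < (j + 1) * m := by
  have h1 : uOf e t < uOf e m := (uOf_mono e) ht
  have h2 : uOf e m = m + j * m := by rw [uOf, he.sum_eq]
  have h3 : (j + 1) * m = j * m + m := by ring
  omega

def sOf (j m : ℕ) (e : ℕ → ℕ) : Finset (Fin ((j + 1) * m + 1)) :=
  (Finset.range m).image (fun t => ((uOf e t : ℕ) : Fin ((j + 1) * m + 1)))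

/-- `A` counts the enumerated marks below `p`, for any valid enumeration. -/
lemma A_enum (w : ℕ → ℕ) (hwL : ∀ t < m, w t < (j + 1) * m + 1)
    (hinj : ∀ t, t < m → ∀ t', t' < m → w t = w t' → t = t')
    {p : ℕ} (hp : p ≤ (j + 1) * m + 1) :
    A j m ((Finset.range m).image (fun t => ((w t : ℕ) : Fin ((j + 1) * m + 1)))) p =
      ((Finset.range m).filter (fun t => w t < p)).card := by
  rw [A]
  refine (Finset.card_bij (fun t _ => w t) ?_ ?_ ?_).symm
  · intro t htf
    rw [Finset.mem_filter, Finset.mem_range] at htf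
    rw [Finset.mem_filter, Finset.mem_range]
    refine ⟨htf.2, ?_⟩
    rw [Finset.mem_image]
    exact ⟨t, Finset.mem_range.2 htf.1, rfl⟩
  · intro a ha b hb h
    rw [Finset.mem_filter, Finset.mem_range] at ha hb
    exact hinj a ha.1 b hb.1 h
  · intro i hi
    rw [Finset.mem_filter, Finset.mem_range, Finset.mem_image] at hi
    obtain ⟨hip, t, htm, hcast⟩ := hi
    rw [Finset.mem_range] at htm
    have hval : w t = i := by
      have := congrArg Fin.val hcast
      rwa [Fin.val_cast_of_lt (hwL t htm), Fin.val_cast_of_lt (by omega)] at this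
    exact ⟨t, Finset.mem_filter.2 ⟨Finset.mem_range.2 htm, by omega⟩, hval⟩

lemma sOf_card {e : ℕ → ℕ} (he : EH j m e) : (sOf j m e).card = m := by
  rw [sOf, Finset.card_image_of_injOn, Finset.card_range]
  intro a ha b hb h
  rw [Finset.mem_coe, Finset.mem_range] at ha hb
  have hval := congrArg Fin.val h
  rw [Fin.val_cast_of_lt (by have := uOf_lt he ha; omega),
    Fin.val_cast_of_lt (by have := uOf_lt he hb; omega)] at hval
  exact (uOf_mono e).injective hval

lemma sOf_good {e : ℕ → ℕ} (he : EH j m e) : Good j m (sOf j m e) := by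
  intro p hp
  have hA : A j m (sOf j m e) p = ((Finset.range m).filter (fun t => uOf e t < p)).card :=
    A_enum (uOf e) (fun t ht => by have := uOf_lt he ht; omega)
      (fun t _ t' _ h => (uOf_mono e).injective h) (by omega)
  have hτm : ((Finset.range m).filter (fun t => uOf e t < p)).card ≤ m := by
    calc ((Finset.range m).filter (fun t => uOf e t < p)).card
        ≤ (Finset.range m).card := Finset.card_filter_le _ _
      _ = m := Finset.card_range m
  have hnat : p ≤ (j + 1) * A j m (sOf j m e) p := by
    rw [hA]
    rcases Nat.eq_or_lt_of_le hτm with heq | hlt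
    · rw [heq]
      omega
    · set τ := ((Finset.range m).filter (fun t => uOf e t < p)).card with hτ
      have hup : p ≤ uOf e τ := by
        by_contra hcon
        push_neg at hcon
        have hsub : Finset.range (τ + 1) ⊆ (Finset.range m).filter (fun t => uOf e t < p) := by
          intro t htm
          rw [Finset.mem_range] at htm
          rw [Finset.mem_filter, Finset.mem_range]
          refine ⟨by omega, ?_⟩
          have : uOf e t ≤ uOf e τ := (uOf_mono e).monotone (by omega)
          omega
        have := Finset.card_le_card hsub
        rw [Finset.card_range] at this
        omega
      have hS : S e τ ≤ j * τ := by
        rcases Nat.eq_zero_or_pos τ with h0 | h0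
        · rw [h0]
          simp [S]
        · obtain ⟨t', ht'⟩ : ∃ t', τ = t' + 1 := ⟨τ - 1, by omega⟩
          rw [ht']
          exact he.partial_le t' (by omega)
      have hu : uOf e τ = τ + S e τ := rfl
      have hmul : (j + 1) * τ = j * τ + τ := by ring
      omega
  rw [Tz]
  have hcast : (p : ℤ) ≤ ((j + 1) * A j m (sOf j m e) p : ℕ) := by exact_mod_cast hnat
  push_cast at hcast ⊢
  linarith

def EtoG (j m : ℕ) : ESet j m → GoodSet j m :=
  fun q => ⟨sOf j m q.1, sOf_card q.2.2, sOf_good q.2.2⟩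

lemma mono_enum_eq {w1 w2 : ℕ → ℕ} (h1 : StrictMono w1) (h2 : StrictMono w2)
    (himg : (Finset.range m).image w1 = (Finset.range m).image w2) :
    ∀ t < m, w1 t = w2 t := by
  intro t
  induction t using Nat.strong_induction_on with
  | _ t ih =>
      intro htm
      have hw1 : w1 t ∈ (Finset.range m).image w2 := by
        rw [← himg, Finset.mem_image]
        exact ⟨t, Finset.mem_range.2 htm, rfl⟩
      rw [Finset.mem_image] at hw1
      obtain ⟨r, hr, hrw⟩ := hw1
      rw [Finset.mem_range] at hr
      have hw2 : w2 t ∈ (Finset.range m).image w1 := by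
        rw [himg, Finset.mem_image]
        exact ⟨t, Finset.mem_range.2 htm, rfl⟩
      rw [Finset.mem_image] at hw2
      obtain ⟨r', hr', hrw'⟩ := hw2
      rw [Finset.mem_range] at hr'
      rcases lt_trichotomy (w1 t) (w2 t) with hlt | heq | hgt
      · exfalso
        have hrt : r < t := by
          by_contra hcon
          push_neg at hcon
          have : w2 t ≤ w2 r := h2.monotone hcon
          omega
        have := ih r hrt (by omega)
        have : w1 r = w1 t := by omega
        have := h1.injective this
        omega
      · exact heq
      · exfalso
        have hrt : r' < t := by
          by_contra hcon
          push_neg at hcon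
          have : w1 t ≤ w1 r' := h1.monotone hcon
          omega
        have := ih r' hrt (by omega)
        have : w2 r' = w2 t := by omega
        have := h2.injective this
        omega

lemma EtoG_inj (hm : 1 ≤ m) : Function.Injective (EtoG j m) := by
  rintro ⟨e1, hs1, he1⟩ ⟨e2, hs2, he2⟩ heq
  have hseq : sOf j m e1 = sOf j m e2 := congrArg Subtype.val heq
  -- transfer to ℕ images
  have himg : (Finset.range m).image (uOf e1) = (Finset.range m).image (uOf e2) := by
    ext n
    rw [Finset.mem_image, Finset.mem_image]
    constructor
    · rintro ⟨t, htm, rfl⟩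
      rw [Finset.mem_range] at htm
      have hmem : ((uOf e1 t : ℕ) : Fin ((j + 1) * m + 1)) ∈ sOf j m e2 := by
        rw [← hseq, sOf, Finset.mem_image]
        exact ⟨t, Finset.mem_range.2 htm, rfl⟩
      rw [sOf, Finset.mem_image] at hmem
      obtain ⟨t', ht', hcast⟩ := hmem
      rw [Finset.mem_range] at ht'
      have hval := congrArg Fin.val hcast
      rw [Fin.val_cast_of_lt (by have := uOf_lt he2 ht'; omega),
        Fin.val_cast_of_lt (by have := uOf_lt he1 htm; omega)] at hval
      exact ⟨t', Finset.mem_range.2 ht', hval⟩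
    · rintro ⟨t, htm, rfl⟩
      rw [Finset.mem_range] at htm
      have hmem : ((uOf e2 t : ℕ) : Fin ((j + 1) * m + 1)) ∈ sOf j m e1 := by
        rw [hseq, sOf, Finset.mem_image]
        exact ⟨t, Finset.mem_range.2 htm, rfl⟩
      rw [sOf, Finset.mem_image] at hmem
      obtain ⟨t', ht', hcast⟩ := hmem
      rw [Finset.mem_range] at ht'
      have hval := congrArg Fin.val hcast
      rw [Fin.val_cast_of_lt (by have := uOf_lt he1 ht'; omega),
        Fin.val_cast_of_lt (by have := uOf_lt he2 htm; omega)] at hval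
      exact ⟨t', Finset.mem_range.2 ht', hval⟩
  have hueq : ∀ t ≤ m, uOf e1 t = uOf e2 t := by
    intro t htm
    rcases Nat.lt_or_ge t m with h | h
    · exact mono_enum_eq (uOf_mono e1) (uOf_mono e2) himg t h
    · have : t = m := by omega
      subst this
      rw [uOf, uOf, he1.sum_eq, he2.sum_eq]
  apply Subtype.ext
  funext t
  show e1 t = e2 t
  rcases Nat.lt_or_ge t m with htm | htm
  · have h1 : uOf e1 (t + 1) = uOf e1 t + 1 + e1 t := by
      rw [uOf, uOf, S_succ]; omega
    have h2 : uOf e2 (t + 1) = uOf e2 t + 1 + e2 t := by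
      rw [uOf, uOf, S_succ]; omega
    have e1t := hueq t (by omega)
    have e2t := hueq (t + 1) (by omega)
    omega
  · rw [hs1 t htm, hs2 t htm]

lemma EtoG_surj (hm : 1 ≤ m) : Function.Surjective (EtoG j m) := by
  rintro ⟨s, hcard, hgood⟩
  classical
  set w : ℕ → ℕ := fun t => if h : t < m then
    ((s.orderIsoOfFin hcard ⟨t, h⟩ : Fin ((j + 1) * m + 1)) : ℕ) else (j + 1) * m + 1 + t
    with hw
  have w_lt : ∀ t < m, w t < (j + 1) * m + 1 := by
    intro t ht
    rw [hw]
    simp only [ht, dif_pos]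
    exact (s.orderIsoOfFin hcard ⟨t, ht⟩ : Fin ((j + 1) * m + 1)).isLt
  have w_mono : ∀ a b, a < b → b < m → w a < w b := by
    intro a b hab hbm
    rw [hw]
    simp only [show a < m by omega, hbm, dif_pos]
    have : (⟨a, by omega⟩ : Fin m) < ⟨b, hbm⟩ := Fin.mk_lt_mk.2 hab
    have h2 := (s.orderIsoOfFin hcard).lt_iff_lt.2 this
    exact h2
  have w_mem : ∀ t (ht : t < m), ((w t : ℕ) : Fin ((j + 1) * m + 1)) ∈ s := by
    intro t ht
    rw [hw]
    simp only [ht, dif_pos]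
    rw [Fin.cast_val_eq_self]
    exact (s.orderIsoOfFin hcard ⟨t, ht⟩).2
  have w_inj : ∀ t, t < m → ∀ t', t' < m → w t = w t' → t = t' := by
    intro t ht t' ht' h
    rcases lt_trichotomy t t' with hc | hc | hc
    · have := w_mono t t' hc ht'; omega
    · exact hc
    · have := w_mono t' t hc ht; omega
  have w_img : (Finset.range m).image (fun t => ((w t : ℕ) : Fin ((j + 1) * m + 1))) = s := by
    apply Finset.eq_of_subset_of_card_le
    · intro x hx
      rw [Finset.mem_image] at hx
      obtain ⟨t, htm, rfl⟩ := hx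
      exact w_mem t (Finset.mem_range.1 htm)
    · rw [hcard, Finset.card_image_of_injOn, Finset.card_range]
      intro a ha b hb h
      rw [Finset.mem_coe, Finset.mem_range] at ha hb
      have hval := congrArg Fin.val h
      rw [Fin.val_cast_of_lt (w_lt a ha), Fin.val_cast_of_lt (w_lt b hb)] at hval
      exact w_inj a ha b hb hval
  have hA : ∀ p ≤ (j + 1) * m + 1,
      A j m s p = ((Finset.range m).filter (fun t => w t < p)).card := by
    intro p hp
    rw [← w_img]
    exact A_enum w w_lt w_inj hp
  have w_zero : w 0 = 0 := by
    have hg := hgood (w 0) (w_lt 0 (by omega))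
    rw [Tz, hA (w 0) (by have := w_lt 0 (by omega); omega)] at hg
    have hempty : ((Finset.range m).filter (fun t => w t < w 0)).card = 0 := by
      rw [Finset.card_eq_zero, Finset.filter_eq_empty_iff]
      intro t htm
      rw [Finset.mem_range] at htm
      rcases Nat.eq_zero_or_pos t with rfl | h0
      · omega
      · have := w_mono 0 t h0 htm
        omega
    rw [hempty] at hg
    push_cast at hg
    omega
  have w_bound : ∀ t < m, w t ≤ (j + 1) * t := by
    intro t ht
    have hg := hgood (w t) (w_lt t ht)
    rw [Tz, hA (w t) (by have := w_lt t ht; omega)] at hg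
    have hfil : ((Finset.range m).filter (fun t' => w t' < w t)).card = t := by
      have : (Finset.range m).filter (fun t' => w t' < w t) = Finset.range t := by
        ext t'
        rw [Finset.mem_filter, Finset.mem_range, Finset.mem_range]
        constructor
        · rintro ⟨ht'm, hlt⟩
          by_contra hcon
          push_neg at hcon
          rcases Nat.eq_or_lt_of_le hcon with rfl | hc
          · omega
          · have := w_mono t t' hc ht'm
            omega
        · intro ht't
          exact ⟨by omega, w_mono t' t ht't ht⟩
      rw [this, Finset.card_range]
    rw [hfil] at hg
    have : (w t : ℤ) ≤ (j + 1) * t := by linarith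
    exact_mod_cast this
  have w_ge : ∀ t < m, t ≤ w t := by
    intro t
    induction t with
    | zero => omega
    | succ t ih =>
        intro ht
        have h1 := ih (by omega)
        have h2 := w_mono t (t + 1) (by omega) ht
        omega
  -- construct e
  set e : ℕ → ℕ := fun t => if t + 1 < m then w (t + 1) - w t - 1
    else if t = m - 1 then j * m + (m - 1) - w (m - 1) else 0 with he
  have hSw : ∀ t < m, S e t + t = w t := by
    intro t
    induction t with
    | zero =>
        intro _
        rw [S]
        simp [w_zero]
    | succ t ih =>
        intro ht
        have h1 := ih (by omega)
        have h2 : e t = w (t + 1) - w t - 1 := by rw [he]; simp only [ht, if_pos]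
        have h3 : S e (t + 1) = S e t + e t := S_succ e t
        have h4 := w_mono t (t + 1) (by omega) ht
        omega
  have hwb : w (m - 1) ≤ j * m + (m - 1) := by
    have h1 := w_bound (m - 1) (by omega)
    have h2 : (j + 1) * (m - 1) ≤ j * m + (m - 1) := by
      have : (j + 1) * (m - 1) = j * (m - 1) + (m - 1) := by ring
      have h3 : j * (m - 1) ≤ j * m := Nat.mul_le_mul_left _ (by omega)
      omega
    omega
  have hSm : S e m = j * m := by
    obtain ⟨t, htm⟩ : ∃ t, m = t + 1 := ⟨m - 1, by omega⟩
    have h1 : S e (t + 1) = S e t + e t := S_succ e t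
    have h2 : e t = j * m + (m - 1) - w (m - 1) := by
      rw [he]
      dsimp only
      rw [if_neg (show ¬ (t + 1 < m) by omega), if_pos (show t = m - 1 by omega)]
    have h3 := hSw t (by omega)
    have h4 : t = m - 1 := by omega
    rw [← htm] at h1
    have h5 : w (m - 1) = w t := by rw [h4]
    omega
  have hEH : EH j m e := by
    constructor
    · exact hSm
    · intro t ht
      rcases Nat.lt_or_ge (t + 1) m with hc | hc
      · have h1 := hSw (t + 1) hc
        have h2 := w_bound (t + 1) hc
        have h3 : (j + 1) * (t + 1) = j * (t + 1) + (t + 1) := by ring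
        omega
      · have hteq : t + 1 = m := by omega
        rw [hteq, hSm]
  have hsupp : ∀ t, m ≤ t → e t = 0 := by
    intro t ht
    rw [he]
    dsimp only
    rw [if_neg (show ¬ (t + 1 < m) by omega), if_neg (show ¬ (t = m - 1) by omega)]
  refine ⟨⟨e, hsupp, hEH⟩, ?_⟩
  apply Subtype.ext
  show sOf j m e = s
  rw [sOf, ← w_img]
  apply Finset.image_congr
  intro t htm
  rw [Finset.mem_coe, Finset.mem_range] at htm
  have hE := hSw t htm
  have huw : uOf e t = w t := by
    simp only [uOf]
    omega
  dsimp only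
  rw [huw]

noncomputable def EGEquiv (hm : 1 ≤ m) : ESet j m ≃ GoodSet j m :=
  Equiv.ofBijective (EtoG j m) ⟨EtoG_inj hm, EtoG_surj hm⟩

end EG
end P312

/-- **Corollary.** For all `j ≥ 1` and `m ≥ 1`, the number of 312-avoiding permutations
of `{1,…,(j+1)m}` whose up/down pattern is `D^j U D^j U ⋯ U D^j` (`m` blocks of `j`
consecutive `D`'s separated by single `U`'s) equals the Fuss–Catalan number
`(1/(jm+1)) * binom((j+1)m, m)` (the number of `(j+2)`-angulations of a convex
`(jm+2)`-gon). -/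
theorem card_pattern_avoids312_eq_fussCatalan (j m : ℕ) (hj : 1 ≤ j) (hm : 1 ≤ m) :
    Nat.card {π : Equiv.Perm (Fin ((j + 1) * m)) // Avoids312 π ∧ PatternDjU j π} =
      ((j + 1) * m).choose m / (j * m + 1) := by
  have h1 : Nat.card {π : Equiv.Perm (Fin ((j + 1) * m)) // Avoids312 π ∧ PatternDjU j π} =
      Nat.card (P312.GoodSet j m) :=
    Nat.card_congr ((P312.permDEquiv j m hj hm).trans
      ((P312.DEEquiv j m).trans (P312.EGEquiv hm)))
  have h2 := P312.card_goodSet_mul j m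
  have h3 := Nat.choose_mul_succ_eq ((j + 1) * m) m
  have h4 : ((j + 1) * m).choose m * ((j + 1) * m + 1) =
      (Nat.card (P312.GoodSet j m) * ((j + 1) * m + 1 - m)) * ((j + 1) * m + 1) := by
    rw [h3, ← h2]
    ring
  have h5 : ((j + 1) * m).choose m = Nat.card (P312.GoodSet j m) * ((j + 1) * m + 1 - m) :=
    Nat.eq_of_mul_eq_mul_right (by omega) h4
  have h6 : (j + 1) * m + 1 - m = j * m + 1 := by
    have : (j + 1) * m = j * m + m := by ring
    omega
  rw [h6] at h5
  rw [h1, h5, Nat.mul_div_cancel _ (show 0 < j * m + 1 by omega)]
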